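/- Every once-appearance branching program B computing the function f(y,z) = ⋁_{i∈[n]} (y_i ∧ z_i) has the following structure: all non-sink nodes of B form a single path of 2n edges a_1, b_1, a_2, b_2, …, a_n, b_n ending in the 0-sink, where for each i the pair of labels {a_i, b_i} equals {y_{π(i)}, z_{π(i)}} for some permutation π of [n]; the edge a_i = 1 goes to b_i, the edges b_i = 0 and a_i = 0 go to a_{i+1} (to the 0-sink when i = n), and each edge b_i = 1 goes to the 1-sink. -/

import Mathlib

/-- A deterministic branching program over `{0,1}` on `n` variables. Nodes are
numbered so that every edge goes to a strictly larger index (this fixes a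
topological order and guarantees acyclicity). `Sum.inr b` denotes the `b`-sink. -/
structure BP (n : ℕ) where
  size : ℕ
  label : Fin size → Fin n
  next : Fin size → Bool → Fin size ⊕ Bool
  source : Fin size ⊕ Bool
  wf : ∀ i b j, next i b = Sum.inl j → i < j

namespace BP

variable {n : ℕ}

/-- Fuel-based evaluation (the fuel `B.size` always suffices thanks to `wf`). -/
def evalAux (B : BP n) (x : Fin n → Bool) : ℕ → Fin B.size ⊕ Bool → Bool
  | _, Sum.inr b => b
  | 0, Sum.inl _ => false
  | k + 1, Sum.inl i => B.evalAux x k (B.next i (x (B.label i)))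

/-- The Boolean value computed by the branching program on input `x`. -/
def eval (B : BP n) (x : Fin n → Bool) : Bool :=
  B.evalAux x B.size B.source

/-- `B` computes the total Boolean function `f`. -/
def Computes (B : BP n) (f : (Fin n → Bool) → Bool) : Prop :=
  ∀ x, B.eval x = f x

/-- A once-appearance branching program: all node labels are distinct. -/
def IsOA (B : BP n) : Prop :=
  Function.Injective B.label

end BP

def yVar (n : ℕ) (i : Fin n) : Fin (n + n) := Fin.castAdd n i

def zVar (n : ℕ) (i : Fin n) : Fin (n + n) := Fin.natAdd n i

/-- `f(y,z) = ⋁_{i ∈ [n]} (y i ∧ z i)`. -/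
def orOfAnds (n : ℕ) (x : Fin (n + n) → Bool) : Bool :=
  decide (∃ i : Fin n, x (yVar n i) = true ∧ x (zVar n i) = true)


namespace BP

variable {m : ℕ} (B : BP m)

/-- Evaluation from node `v` with full fuel. -/
def F (v : Fin B.size) (x : Fin m → Bool) : Bool := B.evalAux x B.size (Sum.inl v)

@[simp] lemma evalAux_inr (x : Fin m → Bool) (k : ℕ) (b : Bool) :
    B.evalAux x k (Sum.inr b) = b := by cases k <;> rfl

lemma evalAux_fuel (x : Fin m → Bool) :
    ∀ d (v : Fin B.size) k k', B.size - v.val ≤ d → B.size - v.val ≤ k →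
      B.size - v.val ≤ k' → B.evalAux x k (Sum.inl v) = B.evalAux x k' (Sum.inl v) := by
  intro d
  induction d with
  | zero => intro v _ _ hd _ _; have := v.isLt; omega
  | succ d ih =>
    intro v k k' hd hk hk'
    have hv := v.isLt
    obtain ⟨k, rfl⟩ : ∃ t, k = t + 1 := ⟨k - 1, by omega⟩
    obtain ⟨k', rfl⟩ : ∃ t, k' = t + 1 := ⟨k' - 1, by omega⟩
    show B.evalAux x k (B.next v (x (B.label v))) = B.evalAux x k' (B.next v (x (B.label v)))
    rcases hw : B.next v (x (B.label v)) with w | b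
    · have hlt := B.wf v _ _ hw
      exact ih w k k' (by omega) (by omega) (by omega)
    · simp

lemma F_step (v : Fin B.size) (x : Fin m → Bool) :
    B.F v x = match B.next v (x (B.label v)) with
      | Sum.inr b => b
      | Sum.inl w => B.F w x := by
  have hv := v.isLt
  obtain ⟨k, hk⟩ : ∃ t, B.size = t + 1 := ⟨B.size - 1, by omega⟩
  show B.evalAux x B.size (Sum.inl v) = _
  rw [B.evalAux_fuel x B.size v B.size (k+1) (by omega) (by omega) (by omega)]
  show B.evalAux x k (B.next v (x (B.label v))) = _
  rcases hw : B.next v (x (B.label v)) with w | b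
  · have hlt := B.wf v _ _ hw
    exact B.evalAux_fuel x B.size w k B.size (by omega) (by omega) (by omega)
  · simp

lemma F_step_inl {v w : Fin B.size} {x : Fin m → Bool} {b : Bool}
    (hb : x (B.label v) = b) (hw : B.next v b = Sum.inl w) : B.F v x = B.F w x := by
  rw [B.F_step v x, hb, hw]

lemma F_step_inr {v : Fin B.size} {x : Fin m → Bool} {b c : Bool}
    (hb : x (B.label v) = b) (hw : B.next v b = Sum.inr c) : B.F v x = c := by
  rw [B.F_step v x, hb, hw]

lemma F_congr : ∀ (k : ℕ) (v : Fin B.size) (x x' : Fin m → Bool),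
    (∀ q : Fin B.size, v.val ≤ q.val → x (B.label q) = x' (B.label q)) →
    B.evalAux x k (Sum.inl v) = B.evalAux x' k (Sum.inl v) := by
  intro k
  induction k with
  | zero => intro v x x' _; rfl
  | succ k ih =>
    intro v x x' h
    show B.evalAux x k (B.next v (x (B.label v))) =
      B.evalAux x' k (B.next v (x' (B.label v)))
    rw [← h v le_rfl]
    rcases hw : B.next v (x (B.label v)) with w | b
    · have hlt := B.wf v _ _ hw
      exact ih w x x' (fun q hq => h q (by omega))
    · simp

lemma F_congr' {v : Fin B.size} {x x' : Fin m → Bool}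
    (h : ∀ q : Fin B.size, v.val ≤ q.val → x (B.label q) = x' (B.label q)) :
    B.F v x = B.F v x' := B.F_congr B.size v x x' h

/-- Dependence: differing outputs force a queried differing variable at a node `≥ v`. -/
lemma exists_node_of_ne {v : Fin B.size} {x x' : Fin m → Bool}
    (h : B.F v x ≠ B.F v x') :
    ∃ q : Fin B.size, v.val ≤ q.val ∧ x (B.label q) ≠ x' (B.label q) := by
  by_contra hc
  push_neg at hc
  exact h (B.F_congr' hc)

/-- A node at index `≥ v` queries `u`, provided `F v` depends on `u`. -/
lemma exists_node_label {v : Fin B.size} {x : Fin m → Bool} {u : Fin m} {b : Bool}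
    (h : B.F v x ≠ B.F v (Function.update x u b)) :
    ∃ q : Fin B.size, v.val ≤ q.val ∧ B.label q = u := by
  obtain ⟨q, hq, hne⟩ := B.exists_node_of_ne h
  refine ⟨q, hq, ?_⟩
  by_contra hne'
  rw [Function.update_of_ne hne'] at hne
  exact hne rfl

lemma card_filter_ge (v : ℕ) (hv : v ≤ B.size) :
    (Finset.univ.filter (fun q : Fin B.size => v ≤ q.val)).card = B.size - v := by
  rw [← Fintype.card_fin (B.size - v)]
  rw [eq_comm, ← Finset.card_univ]
  apply Finset.card_bij (fun (t : Fin (B.size - v)) _ => (⟨v + t.val, by omega⟩ : Fin B.size))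
  · intro t _; simp
  · intro t _ t' _ h
    simp only [Fin.mk.injEq] at h
    exact Fin.ext (by omega)
  · intro q hq
    simp only [Finset.mem_filter] at hq
    refine ⟨⟨q.val - v, by omega⟩, Finset.mem_univ _, ?_⟩
    apply Fin.ext
    simp only []
    omega

/-- Counting: if every variable of `T` is queried at some node of index `≥ v` then
`T.card ≤ B.size - v`. -/
lemma card_le_of_queried (v : ℕ) (hv : v ≤ B.size) (T : Finset (Fin m))
    (h : ∀ u ∈ T, ∃ q : Fin B.size, v ≤ q.val ∧ B.label q = u) :
    T.card ≤ B.size - v := by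
  rcases T.eq_empty_or_nonempty with rfl | ⟨u0, hu0⟩
  · simp
  obtain ⟨q0, _, _⟩ := h u0 hu0
  rw [← B.card_filter_ge v hv]
  apply Finset.card_le_card_of_injOn
    (fun u => if h' : ∃ q : Fin B.size, v ≤ q.val ∧ B.label q = u then h'.choose else q0)
  · intro u hu
    dsimp only
    rw [dif_pos (h u hu)]
    simp only [Finset.coe_filter, Set.mem_setOf_eq, Finset.mem_filter, Finset.mem_univ, true_and]
    exact (h u hu).choose_spec.1
  · intro u hu u' hu' he
    have hu := Finset.mem_coe.mp hu
    have hu' := Finset.mem_coe.mp hu'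
    have e1 := (h u hu).choose_spec.2
    have e2 := (h u' hu').choose_spec.2
    simp only [dif_pos (h u hu), dif_pos (h u' hu')] at he
    rw [← e1, ← e2, he]

/-- Surjectivity of labels onto `T` from index `≥ v`, when the count is tight. -/
lemma label_mem_of_card (v : ℕ) (hv : v ≤ B.size) (T : Finset (Fin m))
    (hcard : T.card = B.size - v)
    (h : ∀ u ∈ T, ∃ q : Fin B.size, v ≤ q.val ∧ B.label q = u)
    (q : Fin B.size) (hq : v ≤ q.val) : B.label q ∈ T := by
  rcases T.eq_empty_or_nonempty with rfl | ⟨u0, hu0⟩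
  · exfalso; have := q.isLt; simp at hcard; omega
  obtain ⟨q0, _, _⟩ := h u0 hu0
  set ch : Fin m → Fin B.size :=
    fun u => if h' : ∃ q : Fin B.size, v ≤ q.val ∧ B.label q = u then h'.choose else q0 with hch
  have hmaps : ∀ u ∈ T, ch u ∈ Finset.univ.filter (fun q : Fin B.size => v ≤ q.val) := by
    intro u hu
    rw [hch]; simp only []; rw [dif_pos (h u hu)]
    simp only [Finset.mem_filter, Finset.mem_univ, true_and]
    exact (h u hu).choose_spec.1
  have hlab : ∀ u ∈ T, B.label (ch u) = u := by
    intro u hu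
    rw [hch]; simp only []; rw [dif_pos (h u hu)]
    exact (h u hu).choose_spec.2
  have hinj : Set.InjOn ch T := by
    intro u hu u' hu' he
    rw [← hlab u hu, ← hlab u' hu', he]
  have himg : T.image ch = Finset.univ.filter (fun q : Fin B.size => v ≤ q.val) := by
    apply Finset.eq_of_subset_of_card_le
    · intro p hp
      obtain ⟨u, hu, rfl⟩ := Finset.mem_image.mp hp
      exact hmaps u hu
    · rw [B.card_filter_ge v hv, Finset.card_image_of_injOn hinj, hcard]
  have : q ∈ T.image ch := by
    rw [himg]; simp [hq]
  obtain ⟨u, hu, rfl⟩ := Finset.mem_image.mp this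
  rw [hlab u hu]; exact hu

end BP

section FS

variable {n : ℕ}

@[simp] lemma yVar_val (i : Fin n) : (yVar n i).val = i.val := rfl
@[simp] lemma zVar_val (i : Fin n) : (zVar n i).val = n + i.val := rfl

@[simp] lemma yVar_inj {i j : Fin n} : yVar n i = yVar n j ↔ i = j := by
  constructor
  · intro h; exact Fin.ext (by have := congrArg Fin.val h; simpa using this)
  · rintro rfl; rfl

@[simp] lemma zVar_inj {i j : Fin n} : zVar n i = zVar n j ↔ i = j := by
  constructor
  · intro h
    have := congrArg Fin.val h
    simp only [zVar_val] at this
    exact Fin.ext (by omega)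
  · rintro rfl; rfl

@[simp] lemma yVar_ne_zVar (i j : Fin n) : ¬ yVar n i = zVar n j := by
  intro h
  have := congrArg Fin.val h
  have := i.isLt
  simp only [yVar_val, zVar_val] at *
  omega

@[simp] lemma zVar_ne_yVar (i j : Fin n) : ¬ zVar n i = yVar n j := by
  intro h; exact yVar_ne_zVar j i h.symm

/-- The subfunction `⋁_{i ∈ S} y_i ∧ z_i`. -/
def fS (n : ℕ) (S : Finset (Fin n)) (x : Fin (n + n) → Bool) : Bool :=
  decide (∃ i ∈ S, x (yVar n i) = true ∧ x (zVar n i) = true)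

lemma fS_true_iff {S : Finset (Fin n)} {x : Fin (n + n) → Bool} :
    fS n S x = true ↔ ∃ i ∈ S, x (yVar n i) = true ∧ x (zVar n i) = true := by
  simp [fS]

lemma fS_eq_false {S : Finset (Fin n)} {x : Fin (n + n) → Bool}
    (h : ∀ i ∈ S, x (yVar n i) = false ∨ x (zVar n i) = false) : fS n S x = false := by
  rw [← Bool.not_eq_true, fS_true_iff]
  rintro ⟨i, hi, h1, h2⟩
  rcases h i hi with h' | h' <;> simp_all

lemma fS_congr {S : Finset (Fin n)} {x x' : Fin (n + n) → Bool}
    (h : ∀ i ∈ S, x (yVar n i) = x' (yVar n i) ∧ x (zVar n i) = x' (zVar n i)) :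
    fS n S x = fS n S x' := by
  have : ∀ {a b : Fin (n+n) → Bool},
      (∀ i ∈ S, a (yVar n i) = b (yVar n i) ∧ a (zVar n i) = b (zVar n i)) →
      fS n S a = true → fS n S b = true := by
    intro a b hab ha
    rw [fS_true_iff] at ha ⊢
    obtain ⟨i, hi, h1, h2⟩ := ha
    exact ⟨i, hi, (hab i hi).1 ▸ h1, (hab i hi).2 ▸ h2⟩
  rcases hx : fS n S x with _ | _
  · rcases hx' : fS n S x' with _ | _
    · rfl
    · have := this (fun i hi => ⟨((h i hi).1).symm, ((h i hi).2).symm⟩) hx'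
      rw [hx] at this
      exact absurd this (by simp)
  · exact (this h hx).symm

lemma fS_erase {S : Finset (Fin n)} {j : Fin n} (hj : j ∈ S) (x : Fin (n + n) → Bool) :
    fS n S x = ((x (yVar n j) && x (zVar n j)) || fS n (S.erase j) x) := by
  rcases hb : ((x (yVar n j) && x (zVar n j)) || fS n (S.erase j) x) with _ | _
  · simp only [Bool.or_eq_false_iff, Bool.and_eq_false_iff] at hb
    apply fS_eq_false
    intro i hi
    rcases eq_or_ne i j with rfl | hne
    · rcases hb.1 with h | h
      · left; simpa using h
      · right; simpa using h
    · have : fS n (S.erase j) x = false := hb.2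
      rw [← Bool.not_eq_true, fS_true_iff] at this
      push_neg at this
      rcases hx : x (yVar n i) with _ | _
      · left; rfl
      · right
        have := this i (Finset.mem_erase.mpr ⟨hne, hi⟩) hx
        simpa using this
  · simp only [Bool.or_eq_true, Bool.and_eq_true] at hb
    rw [fS_true_iff]
    rcases hb with ⟨h1, h2⟩ | h
    · exact ⟨j, hj, h1, h2⟩
    · rw [fS_true_iff] at h
      obtain ⟨i, hi, h1, h2⟩ := h
      exact ⟨i, (Finset.mem_erase.mp hi).2, h1, h2⟩

/-- The set of variables of `fS n S`. -/
def varsS (n : ℕ) (S : Finset (Fin n)) : Finset (Fin (n + n)) :=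
  S.image (yVar n) ∪ S.image (zVar n)

lemma mem_varsS {S : Finset (Fin n)} {u : Fin (n + n)} :
    u ∈ varsS n S ↔ ∃ j ∈ S, u = yVar n j ∨ u = zVar n j := by
  simp only [varsS, Finset.mem_union, Finset.mem_image]
  constructor
  · rintro (⟨j, hj, rfl⟩ | ⟨j, hj, rfl⟩)
    · exact ⟨j, hj, Or.inl rfl⟩
    · exact ⟨j, hj, Or.inr rfl⟩
  · rintro ⟨j, hj, rfl | rfl⟩
    · exact Or.inl ⟨j, hj, rfl⟩
    · exact Or.inr ⟨j, hj, rfl⟩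

lemma card_varsS (S : Finset (Fin n)) : (varsS n S).card = 2 * S.card := by
  rw [varsS, Finset.card_union_of_disjoint, Finset.card_image_of_injective _ (fun a b h => yVar_inj.mp h),
    Finset.card_image_of_injective _ (fun a b h => zVar_inj.mp h)]
  · omega
  · rw [Finset.disjoint_left]
    rintro u hu hu'
    obtain ⟨a, _, rfl⟩ := Finset.mem_image.mp hu
    obtain ⟨b, _, hb⟩ := Finset.mem_image.mp hu'
    exact zVar_ne_yVar b a hb

lemma yVar_mem_varsS {S : Finset (Fin n)} {j : Fin n} (hj : j ∈ S) : yVar n j ∈ varsS n S :=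
  mem_varsS.mpr ⟨j, hj, Or.inl rfl⟩

lemma zVar_mem_varsS {S : Finset (Fin n)} {j : Fin n} (hj : j ∈ S) : zVar n j ∈ varsS n S :=
  mem_varsS.mpr ⟨j, hj, Or.inr rfl⟩

lemma yVar_not_mem_varsS {S : Finset (Fin n)} {j : Fin n} (hj : j ∉ S) :
    yVar n j ∉ varsS n S := by
  intro hmem
  obtain ⟨k, hk, hc | hc⟩ := mem_varsS.mp hmem
  · exact hj (yVar_inj.mp hc ▸ hk)
  · exact yVar_ne_zVar j k hc

lemma zVar_not_mem_varsS {S : Finset (Fin n)} {j : Fin n} (hj : j ∉ S) :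
    zVar n j ∉ varsS n S := by
  intro hmem
  obtain ⟨k, hk, hc | hc⟩ := mem_varsS.mp hmem
  · exact zVar_ne_yVar j k hc
  · exact hj (zVar_inj.mp hc ▸ hk)

lemma fS_update_of_notmem {S : Finset (Fin n)} {u : Fin (n + n)} (hu : u ∉ varsS n S)
    (x : Fin (n + n) → Bool) (b : Bool) : fS n S (Function.update x u b) = fS n S x := by
  apply fS_congr
  intro i hi
  constructor <;> rw [Function.update_of_ne]
  · intro h; exact hu (h ▸ yVar_mem_varsS hi)
  · intro h; exact hu (h ▸ zVar_mem_varsS hi)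

end FS

section GDep

variable {n : ℕ} (B : BP (n + n))

/-- All-false input. -/
def x0 (n : ℕ) : Fin (n + n) → Bool := fun _ => false

lemma fS_x0 (S : Finset (Fin n)) : fS n S (x0 n) = false :=
  fS_eq_false (fun i _ => Or.inl rfl)

/-- Generic form of the function computed at a node: `⋁ W ∨ fS S'`. -/
def GF (n : ℕ) (W : Finset (Fin (n + n))) (S' : Finset (Fin n)) (x : Fin (n + n) → Bool) :
    Bool :=
  decide (∃ u ∈ W, x u = true) || fS n S' x

lemma GF_x0 (W : Finset (Fin (n + n))) (S' : Finset (Fin n)) : GF n W S' (x0 n) = false := by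
  simp [GF, fS_x0, x0]

lemma GF_empty (S' : Finset (Fin n)) (x : Fin (n + n) → Bool) :
    GF n ∅ S' x = fS n S' x := by simp [GF]

lemma GF_single (a : Fin (n + n)) (S' : Finset (Fin n)) (x : Fin (n + n) → Bool) :
    GF n {a} S' x = (x a || fS n S' x) := by
  cases hxa : x a <;> simp [GF, hxa]

lemma GF_pair (a b : Fin (n + n)) (S' : Finset (Fin n)) (x : Fin (n + n) → Bool) :
    GF n {a, b} S' x = (x a || (x b || fS n S' x)) := by
  cases hxa : x a <;> cases hxb : x b <;> simp [GF, hxa, hxb]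

lemma varsS_mono {A C : Finset (Fin n)} (h : A ⊆ C) : varsS n A ⊆ varsS n C := by
  intro u hu
  obtain ⟨t, ht, hc⟩ := mem_varsS.mp hu
  exact mem_varsS.mpr ⟨t, h ht, hc⟩

/-- Generic dependence lemma: every variable of `W ∪ varsS S'` is queried at some
node of index `≥ r`. -/
lemma gdep (r : Fin B.size) (W : Finset (Fin (n + n))) (S' : Finset (Fin n))
    (hdisj : ∀ u ∈ W, u ∉ varsS n S')
    (hf : ∀ x, B.F r x = GF n W S' x) :
    ∀ u ∈ W ∪ varsS n S', ∃ q : Fin B.size, r.val ≤ q.val ∧ B.label q = u := by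
  intro u hu
  rcases Finset.mem_union.mp hu with hu | hu
  · apply B.exists_node_label (x := x0 n) (b := true)
    rw [hf, hf, GF_x0]
    simp only [GF, ne_eq]
    intro hcon
    rcases Bool.or_eq_false_iff.mp hcon.symm with ⟨h1, _⟩
    rw [decide_eq_false_iff_not] at h1
    exact h1 ⟨u, hu, Function.update_self _ _ _⟩
  · obtain ⟨k, hk, rfl | rfl⟩ := mem_varsS.mp hu
    · apply B.exists_node_label (x := Function.update (x0 n) (zVar n k) true) (b := true)
      rw [hf, hf]
      have h1 : GF n W S' (Function.update (x0 n) (zVar n k) true) = false := by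
        simp only [GF, Bool.or_eq_false_iff]
        constructor
        · rw [decide_eq_false_iff_not]
          rintro ⟨w, hw, hw'⟩
          rw [Function.update_apply] at hw'
          split at hw'
          · exact hdisj w hw (by rw [‹w = zVar n k›]; exact zVar_mem_varsS hk)
          · exact Bool.false_ne_true hw'
        · exact fS_eq_false (fun i _ => Or.inl (by
            rw [Function.update_of_ne (by simp)]; rfl))
      have h2 : GF n W S'
          (Function.update (Function.update (x0 n) (zVar n k) true) (yVar n k) true) = true := by
        simp only [GF, Bool.or_eq_true]
        right
        rw [fS_true_iff]
        refine ⟨k, hk, Function.update_self _ _ _, ?_⟩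
        rw [Function.update_of_ne (by simp), Function.update_self]
      rw [h1, h2]
      exact Bool.false_ne_true
    · apply B.exists_node_label (x := Function.update (x0 n) (yVar n k) true) (b := true)
      rw [hf, hf]
      have h1 : GF n W S' (Function.update (x0 n) (yVar n k) true) = false := by
        simp only [GF, Bool.or_eq_false_iff]
        constructor
        · rw [decide_eq_false_iff_not]
          rintro ⟨w, hw, hw'⟩
          rw [Function.update_apply] at hw'
          split at hw'
          · exact hdisj w hw (by rw [‹w = yVar n k›]; exact yVar_mem_varsS hk)
          · exact Bool.false_ne_true hw'
        · exact fS_eq_false (fun i _ => Or.inr (by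
            rw [Function.update_of_ne (by simp)]; rfl))
      have h2 : GF n W S'
          (Function.update (Function.update (x0 n) (yVar n k) true) (zVar n k) true) = true := by
        simp only [GF, Bool.or_eq_true]
        right
        rw [fS_true_iff]
        refine ⟨k, hk, ?_, Function.update_self _ _ _⟩
        rw [Function.update_of_ne (by simp), Function.update_self]
      rw [h1, h2]
      exact Bool.false_ne_true

/-- Generic counting conclusion. -/
lemma gcount (r : Fin B.size) (W : Finset (Fin (n + n))) (S' : Finset (Fin n))
    (hdisj : ∀ u ∈ W, u ∉ varsS n S')
    (hf : ∀ x, B.F r x = GF n W S' x) :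
    W.card + 2 * S'.card ≤ B.size - r.val := by
  have hd : Disjoint W (varsS n S') := by
    rw [Finset.disjoint_left]; exact hdisj
  have := B.card_le_of_queried r.val (le_of_lt r.isLt) (W ∪ varsS n S')
    (gdep B r W S' hdisj hf)
  rwa [Finset.card_union_of_disjoint hd, card_varsS] at this

end GDep

section MainLemma

variable {n : ℕ}

lemma cons_injective {s : ℕ} {γ : Type*} {j : γ} {e' : Fin s → γ}
    (h1 : Function.Injective e') (h2 : ∀ i, e' i ≠ j) :
    Function.Injective (Fin.cons j e' : Fin (s + 1) → γ) := by
  intro a b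
  induction a using Fin.cases with
  | zero =>
    induction b using Fin.cases with
    | zero => intro _; rfl
    | succ b' =>
      intro hab
      rw [Fin.cons_zero, Fin.cons_succ] at hab
      exact absurd hab.symm (h2 b')
  | succ a' =>
    induction b using Fin.cases with
    | zero =>
      intro hab
      rw [Fin.cons_zero, Fin.cons_succ] at hab
      exact absurd hab (h2 a')
    | succ b' =>
      intro hab
      rw [Fin.cons_succ, Fin.cons_succ] at hab
      rw [h1 hab]

lemma main_structure (B : BP (n + n)) (hoa : B.IsOA) :
    ∀ s : ℕ, ∀ S : Finset (Fin n), S.card = s → ∀ hs : 1 ≤ s,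
    ∀ v : ℕ, ∀ hv : v + 2 * s = B.size,
    (∀ x, B.F ⟨v, by omega⟩ x = fS n S x) →
    ((∃ e : Fin s → Fin n, ∃ w : Fin s → Bool, Function.Injective e ∧ (∀ i, e i ∈ S) ∧
      ∀ i : Fin s,
        B.label ⟨v + 2 * i.val, by have := i.isLt; omega⟩ =
          (if w i then yVar n (e i) else zVar n (e i)) ∧
        B.label ⟨v + 2 * i.val + 1, by have := i.isLt; omega⟩ =
          (if w i then zVar n (e i) else yVar n (e i)) ∧
        B.next ⟨v + 2 * i.val, by have := i.isLt; omega⟩ true =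
          Sum.inl ⟨v + 2 * i.val + 1, by have := i.isLt; omega⟩ ∧
        B.next ⟨v + 2 * i.val + 1, by have := i.isLt; omega⟩ true = Sum.inr true ∧
        (∀ h2 : v + 2 * i.val + 2 < B.size,
          B.next ⟨v + 2 * i.val, by have := i.isLt; omega⟩ false = Sum.inl ⟨v + 2 * i.val + 2, h2⟩ ∧
          B.next ⟨v + 2 * i.val + 1, by have := i.isLt; omega⟩ false =
            Sum.inl ⟨v + 2 * i.val + 2, h2⟩) ∧
        (¬ (v + 2 * i.val + 2 < B.size) →
          B.next ⟨v + 2 * i.val, by have := i.isLt; omega⟩ false = Sum.inr false ∧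
          B.next ⟨v + 2 * i.val + 1, by have := i.isLt; omega⟩ false = Sum.inr false)) ∧
     (∀ r : Fin B.size, v ≤ r.val → B.F r (x0 n) = false)) := by
  intro s
  induction s with
  | zero => intro S _ h1; exact absurd h1 (by omega)
  | succ s ih =>
    intro S hcard hs v hv heval
    set V : Fin B.size := ⟨v, by omega⟩ with hVdef
    -- every variable of S is queried at a node of index ≥ v, and conversely
    have hfV : ∀ x, B.F V x = GF n ∅ S x := by
      intro x; rw [heval]; simp [GF]
    have hA : ∀ u ∈ varsS n S, ∃ q : Fin B.size, v ≤ q.val ∧ B.label q = u := by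
      have := gdep B V ∅ S (by simp) hfV
      intro u hu
      exact this u (by simp [hu])
    have hsurj : ∀ q : Fin B.size, v ≤ q.val → B.label q ∈ varsS n S := by
      apply B.label_mem_of_card v (by omega)
      · rw [card_varsS, hcard]; omega
      · exact hA
    -- the variable read at the source of this block
    obtain ⟨j, hj, hyz⟩ := mem_varsS.mp (hsurj V le_rfl)
    obtain ⟨w0, hw0⟩ : ∃ w0 : Bool, B.label V = (if w0 then yVar n j else zVar n j) := by
      rcases hyz with h | h
      · exact ⟨true, h⟩
      · exact ⟨false, h⟩
    set α : Fin (n + n) := B.label V with hαdef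
    set β : Fin (n + n) := if w0 then zVar n j else yVar n j with hβdef
    have hSerase : (S.erase j).card = s := by
      rw [Finset.card_erase_of_mem hj, hcard]
      omega
    have hαβ : β ≠ α := by
      rw [hβdef, hw0]
      cases w0
      · exact yVar_ne_zVar j j
      · exact zVar_ne_yVar j j
    have hαE : α ∉ varsS n (S.erase j) := by
      rw [hw0]
      cases w0
      · exact zVar_not_mem_varsS (Finset.notMem_erase j S)
      · exact yVar_not_mem_varsS (Finset.notMem_erase j S)
    have hβE : β ∉ varsS n (S.erase j) := by
      rw [hβdef]
      cases w0
      · exact yVar_not_mem_varsS (Finset.notMem_erase j S)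
      · exact zVar_not_mem_varsS (Finset.notMem_erase j S)
    -- splitting fS S at the pair j
    have hsplit : ∀ x, fS n S x = ((x α && x β) || fS n (S.erase j) x) := by
      intro x
      rw [fS_erase hj x, hw0, hβdef]
      cases w0
      · show _ = ((x (zVar n j) && x (yVar n j)) || _)
        rw [Bool.and_comm]
      · rfl
    -- Step 1: the true-successor of V is the node at index v+1
    have hstep1 : ∃ P : Fin B.size, P.val = v + 1 ∧ B.next V true = Sum.inl P ∧
        ∀ x, B.F P x = GF n {β} (S.erase j) x := by
      rcases hN : B.next V true with P | c
      · have hPgt : v < P.val := B.wf V true P hN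
        have hFP : ∀ x, B.F P x = fS n S (Function.update x α true) := by
          intro x
          have h1 : B.F P x = B.F P (Function.update x α true) := by
            apply B.F_congr'
            intro q hq
            rw [Function.update_of_ne]
            intro hcon
            have hqV : q = V := hoa (hcon.trans hαdef)
            have : q.val = v := by rw [hqV]
            omega
          calc B.F P x = B.F P (Function.update x α true) := h1
            _ = B.F V (Function.update x α true) :=
                (B.F_step_inl (by rw [← hαdef]; exact Function.update_self _ _ _) hN).symm
            _ = fS n S (Function.update x α true) := heval _
        have hFP' : ∀ x, B.F P x = GF n {β} (S.erase j) x := by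
          intro x
          rw [hFP, hsplit, Function.update_self, Function.update_of_ne hαβ,
            fS_update_of_notmem hαE]
          cases hxb : x β <;> simp [GF, hxb]
        have hc := gcount B P {β} (S.erase j)
          (by intro u hu; rw [Finset.mem_singleton] at hu; subst hu; exact hβE) hFP'
        rw [Finset.card_singleton, hSerase] at hc
        exact ⟨P, by omega, rfl, hFP'⟩
      · exfalso
        have hin1 : (Function.update (Function.update (x0 n) α true) β true) (B.label V)
            = true := by
          rw [← hαdef, Function.update_of_ne (Ne.symm hαβ)]
          exact Function.update_self _ _ _
        have hin2 : (Function.update (x0 n) α true) (B.label V) = true := by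
          rw [← hαdef]
          exact Function.update_self _ _ _
        have h1 : B.F V (Function.update (Function.update (x0 n) α true) β true) = c :=
          B.F_step_inr hin1 hN
        have h2 : B.F V (Function.update (x0 n) α true) = c :=
          B.F_step_inr hin2 hN
        have e1 : fS n S (Function.update (Function.update (x0 n) α true) β true) = true := by
          rw [hsplit, Function.update_self, Function.update_of_ne (Ne.symm hαβ),
            Function.update_self]
          simp
        have e2 : fS n S (Function.update (x0 n) α true) = false := by
          rw [hsplit, Function.update_self, Function.update_of_ne hαβ,
            fS_update_of_notmem hαE, fS_x0]
          rfl
        rw [heval, e1] at h1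
        rw [heval, e2] at h2
        exact absurd (h1.trans h2.symm) (by decide)
    obtain ⟨P, hPval, hNP, hFP⟩ := hstep1
    -- variables of pairs other than j differ from α and β
    have hαk : ∀ k ∈ S.erase j, α ≠ yVar n k ∧ α ≠ zVar n k := by
      intro k hk
      constructor
      · intro hcon; exact hαE (hcon ▸ yVar_mem_varsS hk)
      · intro hcon; exact hαE (hcon ▸ zVar_mem_varsS hk)
    have hβk : ∀ k ∈ S.erase j, β ≠ yVar n k ∧ β ≠ zVar n k := by
      intro k hk
      constructor
      · intro hcon; exact hβE (hcon ▸ yVar_mem_varsS hk)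
      · intro hcon; exact hβE (hcon ▸ zVar_mem_varsS hk)
    -- Step 2: the false-successor of V
    have hstep2 : (s = 0 ∧ B.next V false = Sum.inr false) ∨
        (1 ≤ s ∧ ∃ hM : v + 2 < B.size, B.next V false = Sum.inl ⟨v + 2, hM⟩ ∧
          ∀ x, B.F ⟨v + 2, hM⟩ x = fS n (S.erase j) x) := by
      rcases hM : B.next V false with M | c
      · have hMgt : v < M.val := B.wf V false M hM
        have hFM : ∀ x, B.F M x = fS n (S.erase j) x := by
          intro x
          have h1 : B.F M x = B.F M (Function.update x α false) := by
            apply B.F_congr'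
            intro q hq
            rw [Function.update_of_ne]
            intro hcon
            have hqV : q = V := hoa (hcon.trans hαdef)
            have : q.val = v := by rw [hqV]
            omega
          have h2 : (Function.update x α false) (B.label V) = false := by
            rw [← hαdef]; exact Function.update_self _ _ _
          calc B.F M x = B.F M (Function.update x α false) := h1
            _ = B.F V (Function.update x α false) := (B.F_step_inl h2 hM).symm
            _ = fS n S (Function.update x α false) := heval _
            _ = fS n (S.erase j) x := by
                rw [hsplit, Function.update_self, fS_update_of_notmem hαE]
                simp
        have hMne : M.val ≠ v + 1 := by
          intro hMP
          have hMP' : M = P := Fin.ext (hMP.trans hPval.symm)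
          have hx : B.F P (Function.update (x0 n) β true) = true := by
            rw [hFP]
            simp only [GF, Bool.or_eq_true]
            left
            rw [decide_eq_true_iff]
            exact ⟨β, Finset.mem_singleton_self β, Function.update_self _ _ _⟩
          have hx' : B.F M (Function.update (x0 n) β true) = false := by
            rw [hFM, fS_update_of_notmem hβE, fS_x0]
          rw [hMP'] at hx'
          exact absurd (hx'.symm.trans hx) (by decide)
        rcases Nat.eq_zero_or_pos s with hs0 | hs1
        · exfalso
          have := M.isLt
          omega
        · right
          have hFM' : ∀ x, B.F M x = GF n ∅ (S.erase j) x := by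
            intro x; rw [hFM]; simp [GF]
          have hc := gcount B M ∅ (S.erase j) (by simp) hFM'
          rw [Finset.card_empty, hSerase] at hc
          have hMval : M.val = v + 2 := by omega
          have hlt : v + 2 < B.size := by omega
          have hMeq : M = ⟨v + 2, hlt⟩ := Fin.ext hMval
          refine ⟨hs1, hlt, congrArg Sum.inl hMeq, ?_⟩
          intro x
          rw [← hMeq]
          exact hFM x
      · have h0 : B.F V (x0 n) = c := B.F_step_inr (by rw [← hαdef]; rfl) hM
        rw [heval, fS_x0] at h0
        rcases Nat.eq_zero_or_pos s with hs0 | hs1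
        · left
          rw [← h0]
          exact ⟨hs0, rfl⟩
        · exfalso
          obtain ⟨k, hk⟩ := Finset.card_pos.mp (by omega : 0 < (S.erase j).card)
          set X : Fin (n + n) → Bool :=
            Function.update (Function.update (x0 n) (yVar n k) true) (zVar n k) true with hX
          have hXα : X (B.label V) = false := by
            rw [← hαdef, hX, Function.update_of_ne (hαk k hk).2,
              Function.update_of_ne (hαk k hk).1]
            rfl
          have h1 : B.F V X = c := B.F_step_inr hXα hM
          rw [heval, hsplit] at h1
          have hXβ : X β = false := by
            rw [hX, Function.update_of_ne (hβk k hk).2, Function.update_of_ne (hβk k hk).1]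
            rfl
          have hXe : fS n (S.erase j) X = true := by
            rw [fS_true_iff]
            refine ⟨k, hk, ?_, Function.update_self _ _ _⟩
            rw [hX, Function.update_of_ne (by simp), Function.update_self]
          rw [hXβ, hXe] at h1
          simp only [Bool.and_false, Bool.false_or] at h1
          rw [← h0] at h1
          exact absurd h1 (by decide)
    -- Step 3: the node at v+1 reads the partner variable β
    have hlabP : B.label P = β := by
      by_contra hne
      have huS : B.label P ∈ varsS n S := hsurj P (by omega)
      have huα : B.label P ≠ α := by
        intro hcon
        have hPV : P = V := hoa (hcon.trans hαdef)
        have : P.val = v := by rw [hPV]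
        omega
      obtain ⟨k, hkS, hcu⟩ := mem_varsS.mp huS
      have hkj : k ≠ j := by
        rintro rfl
        cases w0
        · rcases hcu with hc | hc
          · exact hne (by rw [hc, hβdef]; rfl)
          · exact huα (by rw [hc, hw0]; rfl)
        · rcases hcu with hc | hc
          · exact huα (by rw [hc, hw0]; rfl)
          · exact hne (by rw [hc, hβdef]; rfl)
      have hkE : k ∈ S.erase j := Finset.mem_erase.mpr ⟨hkj, hkS⟩
      have hs1 : 1 ≤ s := by
        have := Finset.card_pos.mpr ⟨k, hkE⟩
        omega
      obtain ⟨w1, hw1⟩ : ∃ w1 : Bool, B.label P = (if w1 then yVar n k else zVar n k) := by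
        rcases hcu with h | h
        · exact ⟨true, h⟩
        · exact ⟨false, h⟩
      set u : Fin (n + n) := B.label P with hudef
      set u' : Fin (n + n) := if w1 then zVar n k else yVar n k with hu'def
      have hu'mem : u' ∈ varsS n (S.erase j) := by
        rw [hu'def]
        cases w1
        · exact yVar_mem_varsS hkE
        · exact zVar_mem_varsS hkE
      have hu'u : u' ≠ u := by
        rw [hu'def, hw1]
        cases w1
        · exact yVar_ne_zVar k k
        · exact zVar_ne_yVar k k
      have hβu : β ≠ u := fun hcon => hne hcon.symm
      have hβu' : β ≠ u' := fun hcon => hβE (hcon ▸ hu'mem)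
      have huEE : u ∉ varsS n ((S.erase j).erase k) := by
        rw [hw1]
        cases w1
        · exact zVar_not_mem_varsS (Finset.notMem_erase k _)
        · exact yVar_not_mem_varsS (Finset.notMem_erase k _)
      have hu'EE : u' ∉ varsS n ((S.erase j).erase k) := by
        rw [hu'def]
        cases w1
        · exact yVar_not_mem_varsS (Finset.notMem_erase k _)
        · exact zVar_not_mem_varsS (Finset.notMem_erase k _)
      have hβEE : β ∉ varsS n ((S.erase j).erase k) :=
        fun hcon => hβE (varsS_mono (Finset.erase_subset _ _) hcon)
      have hsplit2 : ∀ x, fS n (S.erase j) x =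
          ((x u && x u') || fS n ((S.erase j).erase k) x) := by
        intro x
        rw [fS_erase hkE x, hw1, hu'def]
        cases w1
        · show _ = ((x (zVar n k) && x (yVar n k)) || _)
          rw [Bool.and_comm]
        · rfl
      rcases hQ : B.next P true with R | c
      · -- the true-successor of P would compute x β ∨ x u' ∨ fS (erase erase)
        have hRgt : P.val < R.val := B.wf P true R hQ
        have hFR : ∀ x, B.F R x = GF n {β, u'} ((S.erase j).erase k) x := by
          intro x
          have h1 : B.F R x = B.F R (Function.update x u true) := by
            apply B.F_congr'
            intro q hq
            rw [Function.update_of_ne]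
            intro hcon
            have hqP : q = P := hoa (hcon.trans hudef)
            have : q.val = P.val := by rw [hqP]
            omega
          calc B.F R x = B.F R (Function.update x u true) := h1
            _ = B.F P (Function.update x u true) :=
              (B.F_step_inl (by rw [← hudef]; exact Function.update_self _ _ _) hQ).symm
            _ = GF n {β} (S.erase j) (Function.update x u true) := hFP _
            _ = GF n {β, u'} ((S.erase j).erase k) x := by
              rw [GF_single, GF_pair, Function.update_of_ne hβu,
                hsplit2, Function.update_self, Function.update_of_ne hu'u,
                fS_update_of_notmem huEE]
              simp
        have hdisj2 : ∀ t ∈ ({β, u'} : Finset (Fin (n + n))),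
            t ∉ varsS n ((S.erase j).erase k) := by
          intro t ht
          rcases Finset.mem_insert.mp ht with rfl | ht
          · exact hβEE
          · rw [Finset.mem_singleton.mp ht]
            exact hu'EE
        have hc := gcount B R {β, u'} ((S.erase j).erase k) hdisj2 hFR
        have hcard2 : ({β, u'} : Finset (Fin (n + n))).card = 2 := by
          rw [Finset.card_insert_of_notMem (by simpa using hβu'), Finset.card_singleton]
        have hcardE : ((S.erase j).erase k).card = s - 1 := by
          rw [Finset.card_erase_of_mem hkE, hSerase]
        rw [hcard2, hcardE] at hc
        have hRval : R.val = v + 2 := by omega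
        -- but the node at v+2 computes fS (S.erase j)
        rcases hstep2 with ⟨hs0, _⟩ | ⟨_, hMlt, _, hFM2⟩
        · omega
        · have hReq : R = ⟨v + 2, hMlt⟩ := Fin.ext hRval
          have hcontra : GF n {β, u'} ((S.erase j).erase k) (Function.update (x0 n) β true)
              = fS n (S.erase j) (Function.update (x0 n) β true) := by
            rw [← hFR, hReq]
            exact hFM2 _
          rw [GF_pair, Function.update_self, fS_update_of_notmem hβE, fS_x0] at hcontra
          simp at hcontra
      · -- a sink as true-successor of P is impossible
        have h1 : B.F P (Function.update (x0 n) u true) = c :=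
          B.F_step_inr (by rw [← hudef]; exact Function.update_self _ _ _) hQ
        have h2 : B.F P (Function.update (Function.update (x0 n) β true) u true) = c :=
          B.F_step_inr (by rw [← hudef]; exact Function.update_self _ _ _) hQ
        rw [hFP, GF_single, Function.update_of_ne hβu, hsplit2, Function.update_self,
          Function.update_of_ne hu'u, fS_update_of_notmem huEE, fS_x0] at h1
        rw [hFP, GF_single, Function.update_of_ne hβu, Function.update_self] at h2
        simp only [x0, Bool.or_false, Bool.and_false, Bool.false_or, Bool.true_or] at h1 h2
        rw [← h2] at h1
        exact absurd h1 (by decide)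
    -- zero clause for indices ≥ v+2 (from the induction hypothesis)
    have hzero2 : ∀ r : Fin B.size, v + 2 ≤ r.val → B.F r (x0 n) = false := by
      rcases hstep2 with ⟨hs0, _⟩ | ⟨hs1, hMlt, _, hFM2⟩
      · intro r hr
        exact absurd r.isLt (by omega)
      · exact (ih (S.erase j) hSerase hs1 (v + 2) (by omega) hFM2).2
    -- Step 4: the true-successor of P is the 1-sink
    have hQ1 : B.next P true = Sum.inr true := by
      rcases hQ : B.next P true with R | c
      · exfalso
        have hRgt : P.val < R.val := B.wf P true R hQ
        have hFR : B.F R (x0 n) = true := by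
          have h1 : B.F R (x0 n) = B.F R (Function.update (x0 n) β true) := by
            apply B.F_congr'
            intro q hq
            rw [Function.update_of_ne]
            intro hcon
            have hqP : q = P := hoa (hcon.trans hlabP.symm)
            have : q.val = P.val := by rw [hqP]
            omega
          calc B.F R (x0 n) = B.F R (Function.update (x0 n) β true) := h1
            _ = B.F P (Function.update (x0 n) β true) :=
              (B.F_step_inl (by rw [hlabP]; exact Function.update_self _ _ _) hQ).symm
            _ = true := by
              rw [hFP, GF_single, Function.update_self, Bool.true_or]
        rw [hzero2 R (by omega)] at hFR
        exact absurd hFR (by decide)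
      · have h2 : B.F P (Function.update (x0 n) β true) = c :=
          B.F_step_inr (by rw [hlabP]; exact Function.update_self _ _ _) hQ
        rw [hFP, GF_single, Function.update_self, Bool.true_or] at h2
        rw [← h2]
    -- Step 5: the false-successor of P
    have hstep5 : (s = 0 ∧ B.next P false = Sum.inr false) ∨
        (1 ≤ s ∧ ∃ hM : v + 2 < B.size, B.next P false = Sum.inl ⟨v + 2, hM⟩) := by
      rcases hQ0 : B.next P false with R | c
      · have hRgt : P.val < R.val := B.wf P false R hQ0
        have hFR : ∀ x, B.F R x = fS n (S.erase j) x := by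
          intro x
          have h1 : B.F R x = B.F R (Function.update x β false) := by
            apply B.F_congr'
            intro q hq
            rw [Function.update_of_ne]
            intro hcon
            have hqP : q = P := hoa (hcon.trans hlabP.symm)
            have : q.val = P.val := by rw [hqP]
            omega
          calc B.F R x = B.F R (Function.update x β false) := h1
            _ = B.F P (Function.update x β false) :=
              (B.F_step_inl (by rw [hlabP]; exact Function.update_self _ _ _) hQ0).symm
            _ = fS n (S.erase j) x := by
              rw [hFP, GF_single, Function.update_self, Bool.false_or,
                fS_update_of_notmem hβE]
        have hs1 : 1 ≤ s := by
          have := R.isLt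
          omega
        have hFR' : ∀ x, B.F R x = GF n ∅ (S.erase j) x := by
          intro x; rw [hFR, GF_empty]
        have hc := gcount B R ∅ (S.erase j) (by simp) hFR'
        rw [Finset.card_empty, hSerase] at hc
        have hRval : R.val = v + 2 := by omega
        have hlt : v + 2 < B.size := by omega
        exact Or.inr ⟨hs1, hlt, congrArg Sum.inl (Fin.ext hRval)⟩
      · have h0 : B.F P (x0 n) = c := B.F_step_inr (by rw [hlabP]; rfl) hQ0
        rw [hFP, GF_single, fS_x0, Bool.or_false] at h0
        simp only [x0] at h0
        rcases Nat.eq_zero_or_pos s with hs0 | hs1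
        · left
          refine ⟨hs0, ?_⟩
          rw [← h0]
        · exfalso
          obtain ⟨k, hk⟩ := Finset.card_pos.mp (by omega : 0 < (S.erase j).card)
          set X : Fin (n + n) → Bool :=
            Function.update (Function.update (x0 n) (yVar n k) true) (zVar n k) true with hX
          have hXβ : X β = false := by
            rw [hX, Function.update_of_ne (hβk k hk).2, Function.update_of_ne (hβk k hk).1]
            rfl
          have h1 : B.F P X = c := B.F_step_inr (by rw [hlabP]; exact hXβ) hQ0
          rw [hFP, GF_single, hXβ, Bool.false_or] at h1
          have hXe : fS n (S.erase j) X = true := by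
            rw [fS_true_iff]
            refine ⟨k, hk, ?_, Function.update_self _ _ _⟩
            rw [hX, Function.update_of_ne (by simp), Function.update_self]
          rw [hXe, ← h0] at h1
          exact absurd h1 (by decide)
    -- zero clause for all indices ≥ v
    have hPeq : P = ⟨v + 1, by omega⟩ := Fin.ext hPval
    have hzeroAll : ∀ r : Fin B.size, v ≤ r.val → B.F r (x0 n) = false := by
      intro r hr
      rcases Nat.lt_or_ge r.val (v + 2) with h | h
      · rcases Nat.eq_or_lt_of_le hr with h1 | h1
        · have : r = V := Fin.ext h1.symm
          rw [this, heval, fS_x0]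
        · have : r = P := Fin.ext (by omega)
          rw [this, hFP, GF_single, fS_x0, Bool.or_false]
          rfl
      · exact hzero2 r h
    -- final assembly
    refine ⟨?_, hzeroAll⟩
    rcases hstep2 with ⟨hs0, hM0⟩ | ⟨hs1, hMlt, hM1, hFM2⟩
    · -- s = 0 : a single pair
      subst hs0
      have hQ0' : B.next P false = Sum.inr false := by
        rcases hstep5 with ⟨_, h⟩ | ⟨hs1', _⟩
        · exact h
        · omega
      refine ⟨fun _ => j, fun _ => w0, ?_, fun _ => hj, ?_⟩
      · intro a b _
        have ha := a.isLt
        have hb := b.isLt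
        exact Fin.ext (by omega)
      · intro i
        have hi0 : i.val = 0 := by have := i.isLt; omega
        simp only [hi0, Nat.mul_zero, Nat.add_zero]
        refine ⟨hw0, ?_, ?_, ?_, ?_, ?_⟩
        · rw [← hPeq]
          exact hlabP.trans hβdef
        · rw [← hPeq]
          exact hNP
        · rw [← hPeq]
          exact hQ1
        · intro h2
          exact absurd h2 (by omega)
        · intro _
          rw [← hPeq]
          exact ⟨hM0, hQ0'⟩
    · -- s ≥ 1 : a pair followed by the inductive tail
      obtain ⟨⟨e', w', hinj', hmem', hstr'⟩, _⟩ :=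
        ih (S.erase j) hSerase hs1 (v + 2) (by omega) hFM2
      have hQ0' : B.next P false = Sum.inl ⟨v + 2, hMlt⟩ := by
        rcases hstep5 with ⟨hs0', _⟩ | ⟨_, hlt, h⟩
        · omega
        · exact h
      refine ⟨Fin.cons j e', Fin.cons w0 w', ?_, ?_, ?_⟩
      · exact cons_injective hinj' (fun i => (Finset.mem_erase.mp (hmem' i)).1)
      · intro i
        induction i using Fin.cases with
        | zero =>
          rw [Fin.cons_zero]
          exact hj
        | succ i' =>
          rw [Fin.cons_succ]
          exact Finset.mem_of_mem_erase (hmem' i')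
      · intro i
        induction i using Fin.cases with
        | zero =>
          simp only [Fin.cons_zero, Fin.val_zero, Nat.mul_zero, Nat.add_zero]
          refine ⟨hw0, ?_, ?_, ?_, ?_, ?_⟩
          · rw [← hPeq]
            exact hlabP.trans hβdef
          · rw [← hPeq]
            exact hNP
          · rw [← hPeq]
            exact hQ1
          · intro h2
            rw [← hPeq]
            exact ⟨hM1, hQ0'⟩
          · intro hn2
            exact absurd hMlt hn2
        | succ i' =>
          have h1 : v + 2 * (Fin.succ i').val = v + 2 + 2 * i'.val := by
            rw [Fin.val_succ]; ring
          simp only [Fin.cons_succ, h1]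
          exact hstr' i' 

end MainLemma

set_option maxHeartbeats 2000000

/-- every once-appearance branching program computing `⋁ᵢ (yᵢ ∧ zᵢ)` consists
of a single path `a_1, b_1, a_2, b_2, …, a_n, b_n` of all `2n` non-sink nodes ending in the
`0`-sink (in the topological order of the program), where `{a_i, b_i} = {y_{π i}, z_{π i}}`
for a permutation `π`, the edge `a_i = 1` goes to `b_i`, the edges `a_i = 0` and `b_i = 0`
go to `a_{i+1}` (to the `0`-sink for `i = n`), and every edge `b_i = 1` goes to the `1`-sink. -/
theorem oaBP_structure_orOfAnds (n : ℕ) (hn : 1 ≤ n) (B : BP (n + n))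
    (hoa : B.IsOA) (hcomp : B.Computes (orOfAnds n)) :
    ∃ h : B.size = n + n, ∃ π : Equiv.Perm (Fin n), ∃ w : Fin n → Bool,
      B.source = Sum.inl (Fin.cast h.symm ⟨0, by omega⟩) ∧
      ∀ i : Fin n,
        let a : Fin B.size := Fin.cast h.symm ⟨2 * i.val, by have := i.isLt; omega⟩
        let b : Fin B.size := Fin.cast h.symm ⟨2 * i.val + 1, by have := i.isLt; omega⟩
        B.label a = (if w i then yVar n (π i) else zVar n (π i)) ∧
        B.label b = (if w i then zVar n (π i) else yVar n (π i)) ∧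
        B.next a true = Sum.inl b ∧
        B.next b true = Sum.inr true ∧
        B.next a false =
          (if hlt : 2 * i.val + 2 < n + n then Sum.inl (Fin.cast h.symm ⟨2 * i.val + 2, hlt⟩)
            else Sum.inr false) ∧
        B.next b false =
          (if hlt : 2 * i.val + 2 < n + n then Sum.inl (Fin.cast h.symm ⟨2 * i.val + 2, hlt⟩)
            else Sum.inr false) := by
  have horAnd : ∀ x, orOfAnds n x = fS n Finset.univ x := by
    intro x
    simp [orOfAnds, fS]
  set i0 : Fin n := ⟨0, by omega⟩ with hi0
  rcases hsrc : B.source with v0 | c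
  · -- the source is an inner node
    have hFv0 : ∀ x, B.F v0 x = fS n Finset.univ x := by
      intro x
      rw [← horAnd, ← hcomp x]
      show B.evalAux x B.size (Sum.inl v0) = B.eval x
      rw [BP.eval, hsrc]
    have hsize_le : B.size ≤ n + n := by
      simpa using Fintype.card_le_of_injective B.label hoa
    have hdep0 := gdep B v0 ∅ Finset.univ (by simp) (fun x => by rw [hFv0, GF_empty])
    have hTcount := B.card_le_of_queried v0.val (le_of_lt v0.isLt) (varsS n Finset.univ)
      (fun u hu => hdep0 u (by simp [hu]))
    rw [card_varsS, Finset.card_univ, Fintype.card_fin] at hTcount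
    have hv0 : v0.val = 0 := by omega
    have hBsize : B.size = n + n := by omega
    have hveq : v0 = ⟨0, by omega⟩ := Fin.ext hv0
    have heval0 : ∀ x, B.F ⟨0, by omega⟩ x = fS n Finset.univ x := by
      intro x
      rw [← hveq]
      exact hFv0 x
    obtain ⟨⟨e, w, hinj, hmem, hstruct⟩, _⟩ :=
      main_structure B hoa n Finset.univ (by simp) hn 0 (by omega) heval0
    have hbij : Function.Bijective e := Finite.injective_iff_bijective.mp hinj
    refine ⟨hBsize, Equiv.ofBijective e hbij, w, ?_, ?_⟩
    · congr 1
    · intro i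
      have hilt := i.isLt
      have ha : Fin.cast hBsize.symm ⟨2 * i.val, by omega⟩ =
          (⟨0 + 2 * i.val, by omega⟩ : Fin B.size) := Fin.ext (by simp)
      have hb' : Fin.cast hBsize.symm ⟨2 * i.val + 1, by omega⟩ =
          (⟨0 + 2 * i.val + 1, by omega⟩ : Fin B.size) := Fin.ext (by simp)
      obtain ⟨s1, s2, s3, s4, s5, s6⟩ := hstruct i
      refine ⟨?_, ?_, ?_, ?_, ?_, ?_⟩
      · rw [ha]
        exact s1
      · rw [hb']
        exact s2
      · rw [ha, hb']
        exact s3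
      · rw [hb']
        exact s4
      · rw [ha]
        by_cases hlt : 2 * i.val + 2 < n + n
        · rw [dif_pos hlt]
          have hc' : Fin.cast hBsize.symm ⟨2 * i.val + 2, hlt⟩ =
              (⟨0 + 2 * i.val + 2, by omega⟩ : Fin B.size) := Fin.ext (by simp)
          rw [hc']
          exact (s5 (by omega)).1
        · rw [dif_neg hlt]
          exact (s6 (by omega)).1
      · rw [hb']
        by_cases hlt : 2 * i.val + 2 < n + n
        · rw [dif_pos hlt]
          have hc' : Fin.cast hBsize.symm ⟨2 * i.val + 2, hlt⟩ =
              (⟨0 + 2 * i.val + 2, by omega⟩ : Fin B.size) := Fin.ext (by simp)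
          rw [hc']
          exact (s5 (by omega)).2
        · rw [dif_neg hlt]
          exact (s6 (by omega)).2
  · -- a sink as source is impossible
    exfalso
    have h1 := hcomp (x0 n)
    have h2 := hcomp (Function.update (Function.update (x0 n) (yVar n i0) true)
      (zVar n i0) true)
    rw [BP.eval, hsrc, B.evalAux_inr] at h1 h2
    rw [horAnd, fS_x0] at h1
    have h2' : fS n Finset.univ (Function.update (Function.update (x0 n) (yVar n i0) true)
        (zVar n i0) true) = true := by
      rw [fS_true_iff]
      refine ⟨i0, Finset.mem_univ i0, ?_, Function.update_self _ _ _⟩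
      rw [Function.update_of_ne (by simp), Function.update_self]
    rw [horAnd, h2'] at h2
    exact absurd (h2.symm.trans h1) (by decide)
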